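/- Let 𝒜 be a finite set of linear maps on ℝⁿ and X a compact convex set containing the origin in its interior. Suppose there exists k ≥ 0 such that A_w(X) ⊆ X for every word w over 𝒜 of length exactly k+1. Then the iteration R₀ = X, R_{k+1} = conv(R_k ∪ ⋃_{A ∈ 𝒜} A(R_k)) satisfies R_{k+1} = R_k, i.e., it terminates in finitely many steps. -/

import Mathlib

theorem stmt_5 {n M : ℕ} (A : Fin M → Module.End ℝ (EuclideanSpace ℝ (Fin n)))
    (X : Set (EuclideanSpace ℝ (Fin n)))
    (hXconv : Convex ℝ X) (hXcomp : IsCompact X)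
    (h0 : (0 : EuclideanSpace ℝ (Fin n)) ∈ interior X)
    (R : ℕ → Set (EuclideanSpace ℝ (Fin n)))
    (hR0 : R 0 = X)
    (hR : ∀ j, R (j + 1) = convexHull ℝ (R j ∪ ⋃ σ : Fin M, (A σ) '' R j))
    (k : ℕ)
    (hw : ∀ w : Fin (k + 1) → Fin M, ((List.ofFn fun i => A (w i)).prod) '' X ⊆ X) :
    R (k + 1) = R k := by
  have mono : ∀ j, R j ⊆ R (j + 1) := fun j => by
    rw [hR j]
    exact Set.subset_union_left.trans (subset_convexHull ℝ _)
  have monole : ∀ {i j : ℕ}, i ≤ j → R i ⊆ R j := by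
    intro i j hij
    induction hij with
    | refl => exact subset_rfl
    | step h ih => exact ih.trans (mono _)
  have Rconv : ∀ j, Convex ℝ (R j) := by
    intro j
    cases j with
    | zero => rw [hR0]; exact hXconv
    | succ j => rw [hR]; exact convex_convexHull ℝ _
  have step1 : ∀ (σ : Fin M) (j : ℕ), A σ '' R j ⊆ R (j + 1) := by
    intro σ j
    rw [hR j]
    exact ((Set.subset_iUnion (fun σ => (A σ) '' R j) σ).trans
      Set.subset_union_right).trans (subset_convexHull ℝ _)
  have stepw : ∀ (m j : ℕ) (w : Fin (m + 1) → Fin M),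
      ((List.ofFn fun i => A (w i)).prod) '' R j ⊆ R (j + (m + 1)) := by
    intro m
    induction m with
    | zero =>
      intro j w
      simpa using step1 (w 0) j
    | succ m ih =>
      intro j w
      have hsplit : (List.ofFn fun i : Fin (m + 2) => A (w i)) =
          A (w 0) :: List.ofFn (fun i : Fin (m + 1) => A (w i.succ)) := by
        rw [List.ofFn_succ]
      rw [hsplit, List.prod_cons]
      have himg : (⇑(A (w 0) * (List.ofFn fun i : Fin (m + 1) => A (w i.succ)).prod)) '' R j
          = A (w 0) '' ((List.ofFn fun i : Fin (m + 1) => A (w i.succ)).prod '' R j) := by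
        rw [Module.End.mul_eq_comp, LinearMap.coe_comp, Set.image_comp]
      rw [himg]
      have h1 := Set.image_mono (f := ⇑(A (w 0))) (ih j (fun i => w i.succ))
      have h2 := step1 (w 0) (j + (m + 1))
      have : j + (m + 1) + 1 = j + (m + 1 + 1) := by omega
      rw [this] at h2
      exact h1.trans h2
  have Q : ∀ (j m : ℕ), m + j ≤ k → ∀ w : Fin (m + 1) → Fin M,
      ((List.ofFn fun i => A (w i)).prod) '' R j ⊆ R k := by
    intro j
    induction j with
    | zero =>
      intro m hm w
      rcases eq_or_lt_of_le hm with h | h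
      · have hmk : m = k := by omega
        subst hmk
        rw [hR0]
        refine (hw w).trans ?_
        rw [← hR0]
        exact monole (Nat.zero_le _)
      · exact (stepw m 0 w).trans (monole (show 0 + (m + 1) ≤ k by omega))
    | succ j ih =>
      intro m hm w
      rw [hR j]
      set B := ((List.ofFn fun i => A (w i)).prod) with hB
      have hpre : convexHull ℝ (R j ∪ ⋃ σ, A σ '' R j) ⊆ ⇑B ⁻¹' R k := by
        apply convexHull_min
        · rintro x (hx | hx)
          · exact ih m (by omega) w (Set.mem_image_of_mem _ hx)
          · obtain ⟨σ, y, hy, rfl⟩ := Set.mem_iUnion.mp hx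
            have hsnoc : (List.ofFn fun i => A ((Fin.snoc w σ : Fin (m + 2) → Fin M) i)).prod = B * A σ := by
              rw [List.ofFn_succ']
              simp [hB, mul_assoc]
            have hmem : (B * A σ) y ∈ R k := by
              have := ih (m + 1) (by omega) (Fin.snoc w σ : Fin (m + 2) → Fin M)
              rw [hsnoc] at this
              exact this (Set.mem_image_of_mem _ hy)
            exact hmem
        · exact (Rconv k).linear_preimage B
      exact Set.image_subset_iff.mpr hpre
  apply Set.Subset.antisymm
  · rw [hR k]
    apply convexHull_min
    · rintro x (hx | hx)
      · exact hx
      · obtain ⟨σ, y, hy, rfl⟩ := Set.mem_iUnion.mp hx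
        have hQ := Q k 0 (by omega) (fun _ => σ)
        simp only [List.ofFn_succ, List.ofFn_zero, List.prod_cons, List.prod_nil,
          mul_one] at hQ
        exact hQ (Set.mem_image_of_mem _ hy)
    · exact Rconv k
  · exact mono k
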